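/- arXiv:1912.10031 — 3 statements merged into one kernel-verified Lean document; each statement's English description precedes it below -/
import Mathlib

section
/- Let γ: {0,…,ℓ} → {1,…,p} be a closed path (γ(0) = γ(ℓ)) with vertex set V_γ = γ({0,…,ℓ}) of size v_γ ≥ 2, such that γ is reduced: every vertex is visited at least twice (each fiber γ⁻¹(z) has at least 2 elements) and γ(u) ≠ γ(u+1) for all 0 ≤ u ≤ ℓ−1. Let s: V_γ → X be any labeling into a set X, let N be the number of connected components of the graph on V_γ whose edges are pairs {γ(i), γ(i+1)} with s(γ(i)) = s(γ(i+1)), and let C = #{ i ∈ {0,…,ℓ−1} : s(γ(i)) ≠ s(γ(i+1)) }. If N ≥ 2, then C ≥ N. -/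
/-- The agreement graph on the vertex set of the closed path `γ` (its image on `{0,…,ℓ}`):
`z` and `z'` are adjacent iff they carry the same label under `s` and form a consecutive
pair of the path. -/
def agreementGraph (p ℓ : ℕ) (γ : ℕ → Fin p) {X : Type*} (s : Fin p → X) :
    SimpleGraph ↥(γ '' Set.Iic ℓ) where
  Adj z z' := z ≠ z' ∧ s z.1 = s z'.1 ∧
    ∃ i < ℓ, ({γ i, γ (i + 1)} : Set (Fin p)) = {z.1, z'.1}
  symm := ⟨by
    rintro z z' ⟨h1, h2, i, hi, h3⟩
    exact ⟨h1.symm, h2.symm, ⟨i, hi, by rw [h3]; exact Set.pair_comm _ _⟩⟩⟩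
  loopless := ⟨fun z h => h.1 rfl⟩

theorem stmt_6 (p ℓ : ℕ) (γ : ℕ → Fin p) (hclosed : γ ℓ = γ 0)
    (hcard : 2 ≤ (γ '' Set.Iic ℓ).ncard)
    (hfib : ∀ z ∈ γ '' Set.Iic ℓ, 2 ≤ {i | i < ℓ ∧ γ i = z}.ncard)
    (hnoconsec : ∀ i < ℓ, γ i ≠ γ (i + 1))
    {X : Type*} (s : Fin p → X)
    (N : ℕ) (hN : N = Nat.card (agreementGraph p ℓ γ s).ConnectedComponent)
    (C : ℕ) (hC : C = {i | i < ℓ ∧ s (γ i) ≠ s (γ (i + 1))}.ncard)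
    (hN2 : 2 ≤ N) :
    N ≤ C := by
  classical
  set V := γ '' Set.Iic ℓ with hV
  have hmem : ∀ i, γ (min i ℓ) ∈ V := fun i => ⟨min i ℓ, min_le_right i ℓ, rfl⟩
  set G := agreementGraph p ℓ γ s with hG
  set vert : ℕ → ↥V := fun i => ⟨γ (min i ℓ), hmem i⟩ with hvertdef
  set c : ℕ → G.ConnectedComponent := fun i => G.connectedComponentMk (vert i) with hcdef
  have hl : 0 < ℓ := by
    by_contra h
    push_neg at h
    have hl0 : ℓ = 0 := by omega
    subst hl0
    have : V = {γ 0} := by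
      ext z
      simp [hV, Set.Iic, Nat.le_zero]
    rw [this] at hcard
    simp at hcard
  have hvert : ∀ i ≤ ℓ, (vert i).1 = γ i := fun i hi => by
    simp [hvertdef, min_eq_left hi]
  have hstep : ∀ i < ℓ, s (γ i) = s (γ (i + 1)) → c i = c (i + 1) := by
    intro i hi hs
    apply SimpleGraph.ConnectedComponent.sound
    apply SimpleGraph.Adj.reachable
    refine ⟨?_, ?_, i, hi, ?_⟩
    · intro h
      apply hnoconsec i hi
      have := congrArg Subtype.val h
      rwa [hvert i hi.le, hvert (i + 1) hi] at this
    · rw [hvert i hi.le, hvert (i + 1) hi]; exact hs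
    · rw [hvert i hi.le, hvert (i + 1) hi]
  have hwrap : c ℓ = c 0 := by
    simp only [hcdef]
    congr 1
    apply Subtype.ext
    rw [hvert ℓ le_rfl, hvert 0 (Nat.zero_le _)]
    exact hclosed
  have hsurj : ∀ K : G.ConnectedComponent, ∃ i < ℓ, c i = K := by
    intro K
    obtain ⟨z, hz⟩ := K.exists_rep
    obtain ⟨i, hi, heq⟩ := z.2
    rcases (show i ≤ ℓ from hi).lt_or_eq with h | h
    · refine ⟨i, h, ?_⟩
      rw [← hz]
      have hvz : vert i = z := Subtype.ext (by rw [hvert i h.le, heq])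
      exact congrArg (Quot.mk G.Reachable) hvz
    · refine ⟨0, hl, ?_⟩
      rw [← hz]
      have hvz : vert 0 = z := Subtype.ext (by
        rw [hvert 0 (Nat.zero_le _), ← heq, h, hclosed])
      exact congrArg (Quot.mk G.Reachable) hvz
  have hkey : ∀ K : G.ConnectedComponent, ∃ i < ℓ, c i = K ∧ c (i + 1) ≠ K := by
    intro K
    by_contra hcon
    push_neg at hcon
    obtain ⟨i₀, hi₀, hci₀⟩ := hsurj K
    have hA : ∀ d, i₀ + d ≤ ℓ → c (i₀ + d) = K := by
      intro d
      induction d with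
      | zero => intro _; exact hci₀
      | succ n ih =>
        intro hle
        have h1 : i₀ + n < ℓ := by omega
        exact hcon (i₀ + n) h1 (ih h1.le)
    have hcl : c ℓ = K := by
      have := hA (ℓ - i₀) (by omega)
      rwa [show i₀ + (ℓ - i₀) = ℓ by omega] at this
    have hc0 : c 0 = K := hwrap ▸ hcl
    have hB : ∀ j, j ≤ ℓ → c j = K := by
      intro j
      induction j with
      | zero => intro _; exact hc0
      | succ n ih =>
        intro hle
        have h1 : n < ℓ := by omega
        exact hcon n h1 (ih h1.le)
    have hnt : Nontrivial G.ConnectedComponent := by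
      rw [← Finite.one_lt_card_iff_nontrivial]
      omega
    obtain ⟨K', hK'⟩ := exists_ne K
    obtain ⟨i', hi', hci'⟩ := hsurj K'
    exact hK' (by rw [← hci', hB i' hi'.le])
  set D : Set ℕ := {i | i < ℓ ∧ s (γ i) ≠ s (γ (i + 1))} with hD
  have hDfin : D.Finite := (Set.finite_Iio ℓ).subset (fun i hi => hi.1)
  haveI : Finite ↥D := hDfin.to_subtype
  let F : G.ConnectedComponent → ↥D := fun K =>
    ⟨(hkey K).choose, (hkey K).choose_spec.1, fun hs =>
      (hkey K).choose_spec.2.2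
        ((hstep _ (hkey K).choose_spec.1 hs) ▸ (hkey K).choose_spec.2.1)⟩
  have hFinj : Function.Injective F := by
    intro K K' h
    have h1 : (hkey K).choose = (hkey K').choose := congrArg Subtype.val h
    have := (hkey K).choose_spec.2.1
    rw [h1, (hkey K').choose_spec.2.1] at this
    exact this.symm
  calc N = Nat.card G.ConnectedComponent := hN
    _ ≤ Nat.card ↥D := Nat.card_le_card_of_injective F hFinj
    _ = D.ncard := Nat.card_coe_set_eq D
    _ = C := hC.symm
end

section
/- Let γ: {0,…,ℓ} → {1,…,p} be a reduced closed path with v_γ ≥ 2 (every vertex visited at least twice and γ(u) ≠ γ(u+1) for all u), and let s be a labeling of V_γ with agreement-graph component count N ≥ 2 and C = #{i : s(γ(i)) ≠ s(γ(i+1))}. Then C ≥ max(N, 3N − v_γ). -/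
lemma mod_inj_aux (x y n : ℕ) (h : x % n = y % n) (h1 : x ≤ y) (h2 : y < x + n) : x = y := by
  have hd : n ∣ y - x := (Nat.modEq_iff_dvd' h1).mp h
  have := Nat.eq_zero_of_dvd_of_lt hd (by omega)
  omega

theorem stmt_9 (p ℓ : ℕ) (γ : ℕ → Fin p) (hclosed : γ ℓ = γ 0)
    (v : ℕ) (hv : v = (γ '' Set.Iic ℓ).ncard) (hv2 : 2 ≤ v)
    (hfib : ∀ z ∈ γ '' Set.Iic ℓ, 2 ≤ {i | i < ℓ ∧ γ i = z}.ncard)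
    (hnoconsec : ∀ i < ℓ, γ i ≠ γ (i + 1))
    {X : Type*} (s : Fin p → X)
    (N : ℕ) (hN : N = Nat.card (agreementGraph p ℓ γ s).ConnectedComponent)
    (C : ℕ) (hC : C = {i | i < ℓ ∧ s (γ i) ≠ s (γ (i + 1))}.ncard)
    (hN2 : 2 ≤ N) :
    max N (3 * N - v) ≤ C := by
  classical
  set V : Set (Fin p) := γ '' Set.Iic ℓ with hV
  set G : SimpleGraph ↥V := agreementGraph p ℓ γ s with hG
  -- ℓ is positive
  have hl : 0 < ℓ := by
    rcases Nat.eq_zero_or_pos ℓ with h | h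
    · exfalso
      subst h
      have : V = {γ 0} := by
        ext x
        simp only [hV, Set.mem_image, Set.mem_Iic, Nat.le_zero, Set.mem_singleton_iff]
        constructor
        · rintro ⟨j, rfl, rfl⟩; rfl
        · rintro rfl; exact ⟨0, rfl, rfl⟩
      rw [hv, this, Set.ncard_singleton] at hv2; omega
    · exact h
  -- the cyclic vertex function
  have hmem : ∀ i : ℕ, γ (i % ℓ) ∈ V := fun i => ⟨i % ℓ, Nat.le_of_lt (Nat.mod_lt _ hl), rfl⟩
  set vtx : ℕ → ↥V := fun i => ⟨γ (i % ℓ), hmem i⟩ with hvtx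
  have succ_eq : ∀ i : ℕ, γ ((i + 1) % ℓ) = γ (i % ℓ + 1) := by
    intro i
    have hkey : (i + 1) % ℓ = (i % ℓ + 1) % ℓ := by
      conv_lhs => rw [← Nat.mod_add_mod]
    rcases Nat.lt_or_ge (i % ℓ + 1) ℓ with h | h
    · rw [hkey, Nat.mod_eq_of_lt h]
    · have hmod : i % ℓ < ℓ := Nat.mod_lt _ hl
      have heq : i % ℓ + 1 = ℓ := by omega
      rw [hkey, heq, Nat.mod_self, hclosed]
  -- a non-disagreement step gives adjacency
  have step : ∀ i : ℕ, s (γ (i % ℓ)) = s (γ (i % ℓ + 1)) → G.Adj (vtx i) (vtx (i + 1)) := by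
    intro i h
    have hmod : i % ℓ < ℓ := Nat.mod_lt _ hl
    have hval : (vtx (i + 1) : Fin p) = γ (i % ℓ + 1) := succ_eq i
    have hne : γ (i % ℓ) ≠ γ (i % ℓ + 1) := hnoconsec _ hmod
    refine ⟨?_, ?_, i % ℓ, hmod, ?_⟩
    · intro heq
      apply hne
      have := congrArg Subtype.val heq
      rwa [hval] at this
    · show s (γ (i % ℓ)) = s ((vtx (i + 1) : Fin p))
      rw [hval]; exact h
    · show ({γ (i % ℓ), γ (i % ℓ + 1)} : Set (Fin p)) = {(vtx i : Fin p), (vtx (i + 1) : Fin p)}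
      rw [hval]
  -- reachability along agreement runs
  have reach : ∀ (k a : ℕ), (∀ j, a ≤ j → j < a + k → s (γ (j % ℓ)) = s (γ (j % ℓ + 1))) →
      G.Reachable (vtx a) (vtx (a + k)) := by
    intro k
    induction k with
    | zero => intro a _; rfl
    | succ k ih =>
      intro a h
      have h1 := ih a (fun j hj hj' => h j hj (by omega))
      have h2 := (step (a + k) (h (a + k) (by omega) (by omega))).reachable
      rw [show a + (k + 1) = a + k + 1 by omega]
      exact h1.trans h2
  have vtx_val : ∀ j ≤ ℓ, (vtx j : Fin p) = γ j := by
    intro j hj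
    rcases eq_or_lt_of_le hj with h | h
    · subst h; show γ (j % j) = γ j; rw [Nat.mod_self, ← hclosed]
    · show γ (j % ℓ) = γ j; rw [Nat.mod_eq_of_lt h]
  -- every element of V is some vtx
  have vtx_surj : ∀ z : ↥V, ∃ j < ℓ, vtx j = z := by
    intro z
    obtain ⟨j, hj, hjz⟩ := z.2
    rcases Nat.lt_or_ge j ℓ with h | h
    · exact ⟨j, h, Subtype.ext (by rw [vtx_val j (le_of_lt h), hjz])⟩
    · have : j = ℓ := le_antisymm hj h
      subst this
      exact ⟨0, hl, Subtype.ext (by rw [vtx_val 0 (Nat.zero_le _), ← hclosed, hjz])⟩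
  set D : Finset ℕ := (Finset.range ℓ).filter (fun i => s (γ i) ≠ s (γ (i + 1))) with hD
  have hCD : C = D.card := by
    rw [hC]
    have : {i | i < ℓ ∧ s (γ i) ≠ s (γ (i + 1))} = ↑D := by
      ext i; simp [hD]
    rw [this, Set.ncard_coe_finset]
  -- D is nonempty
  have hDne : D.Nonempty := by
    rw [Finset.nonempty_iff_ne_empty]
    intro hE
    have hag : ∀ i < ℓ, s (γ i) = s (γ (i + 1)) := by
      intro i hi
      by_contra hne
      have : i ∈ D := by simp [hD, hi, hne]
      rw [hE] at this
      simp at this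
    have hreach : ∀ z : ↥V, G.Reachable (vtx 0) z := by
      intro z
      obtain ⟨j, hj, rfl⟩ := vtx_surj z
      have := reach j 0 (fun k _ hk' => by
        have hkl : k < ℓ := by omega
        rw [Nat.mod_eq_of_lt hkl]; exact hag k hkl)
      simpa using this
    have hsub : Subsingleton G.ConnectedComponent := by
      constructor
      intro a b
      obtain ⟨za, rfl⟩ := Quot.exists_rep a
      obtain ⟨zb, rfl⟩ := Quot.exists_rep b
      exact SimpleGraph.ConnectedComponent.sound ((hreach za).symm.trans (hreach zb))
    have : Nat.card G.ConnectedComponent = 1 := by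
      haveI := hsub
      exact Nat.card_of_subsingleton (G.connectedComponentMk (vtx 0))
    rw [hN] at hN2
    omega
  obtain ⟨d₀, hd₀⟩ := hDne
  rw [Finset.mem_filter, Finset.mem_range] at hd₀
  -- components
  set Kt := G.ConnectedComponent with hKt
  set comp : ↥V → Kt := G.connectedComponentMk with hcomp
  haveI : Finite ↥V := Subtype.finite
  haveI : Finite Kt := Quot.finite _
  haveI : Fintype ↥V := Fintype.ofFinite _
  haveI : Fintype Kt := Fintype.ofFinite _
  have hNcard : N = Fintype.card Kt := by rw [hN, Nat.card_eq_fintype_card]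
  -- the start of the arc containing i
  set P : ℕ → Prop := fun m => d₀ < m ∧ s (γ ((m - 1) % ℓ)) ≠ s (γ ((m - 1) % ℓ + 1)) with hP
  set start : ℕ → ℕ := fun i => Nat.findGreatest P i with hstart
  have hP0 : P (d₀ + 1) := by
    refine ⟨by omega, ?_⟩
    simpa [Nat.mod_eq_of_lt hd₀.1] using hd₀.2
  have hstart_le : ∀ i, start i ≤ i := fun i => Nat.findGreatest_le i
  have hstart_ge : ∀ i, d₀ < i → d₀ + 1 ≤ start i := fun i hi => Nat.le_findGreatest (by omega) hP0
  have hstart_spec : ∀ i, d₀ < i → P (start i) := fun i hi => Nat.findGreatest_spec (m := d₀+1) (by omega) hP0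
  have hstart_max : ∀ i, d₀ < i → ∀ j, start i ≤ j → j < i → s (γ (j % ℓ)) = s (γ (j % ℓ + 1)) := by
    intro i hi j hj1 hj2
    by_contra hne
    exact Nat.findGreatest_is_greatest (show start i < j + 1 by omega) (show j + 1 ≤ i by omega)
      (⟨by have := hstart_ge i hi; omega, by simpa using hne⟩ : P (j + 1))
  have reach_start : ∀ i, d₀ < i → G.Reachable (vtx (start i)) (vtx i) := by
    intro i hi
    have h := hstart_le i
    have := reach (i - start i) (start i) (fun j hj hj' => hstart_max i hi j hj (by omega))
    rwa [Nat.add_sub_cancel' h] at this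
  set g : ℕ → ℕ := fun i => (start i - 1) % ℓ with hg
  have hgD : ∀ i, d₀ < i → g i ∈ D := by
    intro i hi
    obtain ⟨h1, h2⟩ := hstart_spec i hi
    simp only [hD, Finset.mem_filter, Finset.mem_range]
    exact ⟨Nat.mod_lt _ hl, h2⟩
  -- key injectivity: same g value within window implies same start
  have start_inj : ∀ i i', d₀ < i → i ≤ d₀ + ℓ → d₀ < i' → i' ≤ d₀ + ℓ → g i = g i' →
      start i = start i' := by
    intro i i' hi1 hi2 hi1' hi2' hgg
    have a1 := hstart_ge i hi1; have a2 := hstart_le i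
    have b1 := hstart_ge i' hi1'; have b2 := hstart_le i'
    rcases Nat.le_total (start i) (start i') with h | h
    · have := mod_inj_aux (start i - 1) (start i' - 1) ℓ hgg (by omega) (by omega); omega
    · have := mod_inj_aux (start i' - 1) (start i - 1) ℓ hgg.symm (by omega) (by omega); omega
  have g_comp : ∀ i i', d₀ < i → i ≤ d₀ + ℓ → d₀ < i' → i' ≤ d₀ + ℓ → g i = g i' →
      comp (vtx i) = comp (vtx i') := by
    intro i i' hi1 hi2 hi1' hi2' hgg
    have hs := start_inj i i' hi1 hi2 hi1' hi2' hgg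
    have r1 := reach_start i hi1
    have r2 := reach_start i' hi1'
    rw [hs] at r1
    exact SimpleGraph.ConnectedComponent.sound (r1.symm.trans r2)
  -- every vertex appears in the window (d₀, d₀+ℓ]
  have window : ∀ j < ℓ, ∃ i, d₀ < i ∧ i ≤ d₀ + ℓ ∧ i % ℓ = j := by
    intro j hj
    rcases Nat.lt_or_ge d₀ j with h | h
    · exact ⟨j, h, by omega, Nat.mod_eq_of_lt hj⟩
    · exact ⟨j + ℓ, by omega, by omega, by rw [Nat.add_mod_right, Nat.mod_eq_of_lt hj]⟩
  -- isolated vertices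
  set Isol : ↥V → Prop := fun z => ∀ w, ¬ G.Adj z w with hIsol
  have isol_start : ∀ i, d₀ < i → Isol (vtx i) → start i = i := by
    intro i hi hz
    by_contra hne
    have h1 := hstart_le i
    have h2 : start i ≤ i - 1 := by omega
    have hag := hstart_max i hi (i - 1) h2 (by omega)
    have := step (i - 1) hag
    rw [Nat.sub_add_cancel (by omega : 1 ≤ i)] at this
    exact hz _ this.symm
  have isol_comp : ∀ z w : ↥V, Isol z → comp z = comp w → z = w := by
    intro z w hz h
    have hr : G.Reachable z w := (SimpleGraph.ConnectedComponent.eq).mp h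
    obtain ⟨walk⟩ := hr
    cases walk with
    | nil => rfl
    | cons h' _ => exact absurd h' (hz _)
  -- singleton components
  set Sing : Kt → Prop := fun K => ∃ z, Isol z ∧ comp z = K with hSing
  -- choose representatives: for each K, a window index
  have hexists : ∀ K : Kt, ∃ i, d₀ < i ∧ i ≤ d₀ + ℓ ∧ comp (vtx i) = K := by
    obtain := 0
    intro K
    obtain ⟨z, rfl⟩ := Quot.exists_rep K
    obtain ⟨j, hj, hjz⟩ := vtx_surj z
    obtain ⟨i, hi1, hi2, hi3⟩ := window j hj
    refine ⟨i, hi1, hi2, ?_⟩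
    have : vtx i = z := by rw [← hjz]; exact Subtype.ext (by show γ (i % ℓ) = γ (j % ℓ); rw [hi3, Nat.mod_eq_of_lt hj])
    rw [this]; rfl
  -- for singleton components: two window indices with distinct g values
  have hexists2 : ∀ K : Kt, Sing K → ∃ i i',
      (d₀ < i ∧ i ≤ d₀ + ℓ ∧ comp (vtx i) = K) ∧
      (d₀ < i' ∧ i' ≤ d₀ + ℓ ∧ comp (vtx i') = K) ∧ g i ≠ g i' := by
    intro K hK
    obtain ⟨z, hzI, hzK⟩ := hK
    have hz2 : 2 ≤ {j | j < ℓ ∧ γ j = (z : Fin p)}.ncard := hfib z.1 z.2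
    have hfin : {j | j < ℓ ∧ γ j = (z : Fin p)}.Finite :=
      (Set.finite_Iio ℓ).subset (fun j hj => hj.1)
    obtain ⟨j₁, j₂, hj₁, hj₂, hjne⟩ := (Set.one_lt_ncard_iff hfin).mp (by omega)
    obtain ⟨i₁, hi₁1, hi₁2, hi₁3⟩ := window j₁ hj₁.1
    obtain ⟨i₂, hi₂1, hi₂2, hi₂3⟩ := window j₂ hj₂.1
    have hv₁ : vtx i₁ = z := Subtype.ext (by show γ (i₁ % ℓ) = (z : Fin p); rw [hi₁3]; exact hj₁.2)
    have hv₂ : vtx i₂ = z := Subtype.ext (by show γ (i₂ % ℓ) = (z : Fin p); rw [hi₂3]; exact hj₂.2)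
    refine ⟨i₁, i₂, ⟨hi₁1, hi₁2, by rw [hv₁]; exact hzK⟩, ⟨hi₂1, hi₂2, by rw [hv₂]; exact hzK⟩, ?_⟩
    intro hgg
    have e₁ : start i₁ = i₁ := isol_start i₁ hi₁1 (by rw [hv₁]; exact hzI)
    have e₂ : start i₂ = i₂ := isol_start i₂ hi₂1 (by rw [hv₂]; exact hzI)
    have hgg' : (i₁ - 1) % ℓ = (i₂ - 1) % ℓ := by
      simp only [hg] at hgg; rwa [e₁, e₂] at hgg
    have hii : i₁ = i₂ := by
      rcases Nat.le_total i₁ i₂ with h | h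
      · have := mod_inj_aux (i₁ - 1) (i₂ - 1) ℓ hgg' (by omega) (by omega); omega
      · have := mod_inj_aux (i₂ - 1) (i₁ - 1) ℓ hgg'.symm (by omega) (by omega); omega
    exact hjne (by rw [← hi₁3, ← hi₂3, hii])
  -- C ≥ N + N₁
  have claim1 : Fintype.card Kt + Fintype.card {K : Kt // Sing K} ≤ C := by
    choose a ha1 ha2 ha3 using hexists
    choose b c hbc using hexists2
    set F : Kt ⊕ {K : Kt // Sing K} → ℕ := fun x =>
      match x with
      | .inl K => if h : Sing K then g (b K h) else g (a K)
      | .inr ⟨K, h⟩ => g (c K h) with hF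
    -- window index attached to x
    have hw : ∀ x : Kt ⊕ {K : Kt // Sing K}, ∃ i, F x = g i ∧ d₀ < i ∧ i ≤ d₀ + ℓ ∧
        comp (vtx i) = (match x with | .inl K => K | .inr ⟨K, _⟩ => K) := by
      rintro (K | ⟨K, h⟩)
      · by_cases h : Sing K
        · obtain ⟨h1, h2⟩ := hbc K h
          exact ⟨b K h, by simp [hF, h], h1.1, h1.2.1, h1.2.2⟩
        · exact ⟨a K, by simp [hF, h], ha1 K, ha2 K, ha3 K⟩
      · obtain ⟨h1, h2, h3⟩ := hbc K h
        exact ⟨c K h, rfl, h2.1, h2.2.1, h2.2.2⟩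
    have hmaps : ∀ x, F x ∈ D := by
      intro x
      obtain ⟨i, hFi, hi1, _, _⟩ := hw x
      rw [hFi]
      exact hgD i hi1
    have hcompeq : ∀ x y, F x = F y →
        (match x with | .inl K => K | .inr ⟨K, _⟩ => K) =
        (match y with | .inl K => K | .inr ⟨K, _⟩ => K) := by
      intro x y hxy
      obtain ⟨i, hFi, hi1, hi2, hi3⟩ := hw x
      obtain ⟨i', hFi', hi1', hi2', hi3'⟩ := hw y
      rw [← hi3, ← hi3']
      exact g_comp i i' hi1 hi2 hi1' hi2' (by rw [← hFi, ← hFi', hxy])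
    have hinj : Function.Injective F := by
      rintro (K | ⟨K, h⟩) (K' | ⟨K', h'⟩) hxy
      · exact congrArg Sum.inl (hcompeq (Sum.inl K) (Sum.inl K') hxy)
      · exfalso
        have hKK : K = K' := hcompeq (Sum.inl K) (Sum.inr ⟨K', h'⟩) hxy
        subst hKK
        have : F (Sum.inl K) = g (b K h') := by simp only [hF]; rw [dif_pos h']
        exact (hbc K h').2.2 (by rw [← this, hxy])
      · exfalso
        have hKK : K' = K := (hcompeq (Sum.inr ⟨K, h⟩) (Sum.inl K') hxy).symm
        subst hKK
        have : F (Sum.inl K') = g (b K' h) := by simp only [hF]; rw [dif_pos h]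
        exact (hbc K' h).2.2 (by rw [← this, ← hxy])
      · have hKK : K = K' := hcompeq (Sum.inr ⟨K, h⟩) (Sum.inr ⟨K', h'⟩) hxy
        subst hKK
        rfl
    have hcard := Finset.card_le_card_of_injOn (s := Finset.univ) (t := D) F
      (fun x _ => hmaps x) hinj.injOn
    rw [Finset.card_univ, Fintype.card_sum] at hcard
    omega
  -- v ≥ 2N - N₁
  have claim2 : 2 * Fintype.card Kt ≤ v + Fintype.card {K : Kt // Sing K} := by
    have hVcard : v = Fintype.card ↥V := by
      rw [hv, ← Nat.card_coe_set_eq, Nat.card_eq_fintype_card]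
    have hsum : Fintype.card ↥V =
        ∑ K : Kt, (Finset.univ.filter (fun z : ↥V => comp z = K)).card := by
      rw [← Finset.card_univ]
      exact Finset.card_eq_sum_card_fiberwise (fun z _ => Finset.mem_univ _)
    have hpt : ∀ K : Kt, 2 ≤ (Finset.univ.filter (fun z : ↥V => comp z = K)).card
        + (if Sing K then 1 else 0) := by
      intro K
      obtain ⟨z, hzK⟩ := Quot.exists_rep K
      by_cases hS : Sing K
      · rw [if_pos hS]
        have h1 : 0 < (Finset.univ.filter (fun z : ↥V => comp z = K)).card :=
          Finset.card_pos.mpr ⟨z, Finset.mem_filter.mpr ⟨Finset.mem_univ _, hzK⟩⟩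
        omega
      · rw [if_neg hS]
        have hni : ¬ Isol z := fun hI => hS ⟨z, hI, hzK⟩
        obtain ⟨w, hw⟩ : ∃ w, G.Adj z w := by
          by_contra hno
          push_neg at hno
          exact hni hno
        have hwK : comp w = K := by
          rw [← hzK]
          exact SimpleGraph.ConnectedComponent.sound hw.symm.reachable
        have h2 : 1 < (Finset.univ.filter (fun z : ↥V => comp z = K)).card :=
          Finset.one_lt_card_iff.mpr ⟨z, w, Finset.mem_filter.mpr ⟨Finset.mem_univ _, hzK⟩,
            Finset.mem_filter.mpr ⟨Finset.mem_univ _, hwK⟩, hw.ne⟩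
        omega
    have h1 : ∑ K : Kt, 2 ≤ ∑ K : Kt, ((Finset.univ.filter (fun z : ↥V => comp z = K)).card
        + (if Sing K then 1 else 0)) := Finset.sum_le_sum (fun K _ => hpt K)
    rw [Finset.sum_add_distrib, ← hsum, Finset.sum_const, Finset.card_univ, smul_eq_mul,
      ← Finset.card_filter, ← Fintype.card_subtype] at h1
    rw [hVcard]
    omega
  rw [hNcard]
  omega
end

section
/- The number N(n) of pairwise mutually unbiased orthonormal bases of ℂⁿ (n ≥ 2) is at most n+1. Equivalently: if B₁,…,Bₘ are orthonormal bases of ℂⁿ with |⟨u,w⟩| = 1/√n whenever u ∈ Bᵢ, w ∈ Bⱼ, i ≠ j, then m ≤ n + 1. -/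
open scoped InnerProductSpace
open Finset

noncomputable def PP {n : ℕ} (u : EuclideanSpace ℂ (Fin n)) : EuclideanSpace ℂ (Fin n × Fin n) :=
  WithLp.toLp 2 (fun p : Fin n × Fin n => u p.1 * (starRingEnd ℂ) (u p.2))

noncomputable def EE (n : ℕ) : EuclideanSpace ℂ (Fin n × Fin n) :=
  WithLp.toLp 2 (fun p : Fin n × Fin n => if p.1 = p.2 then (1:ℂ) else 0)

lemma inner_PP_PP {n : ℕ} (u w : EuclideanSpace ℂ (Fin n)) :
    ⟪PP u, PP w⟫_ℂ = ⟪u, w⟫_ℂ * (starRingEnd ℂ) ⟪u, w⟫_ℂ := by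
  simp only [PP, WithLp.ofLp_toLp, PiLp.inner_apply, RCLike.inner_apply, Fintype.sum_prod_type, map_sum, map_mul,
    RingHomCompTriple.comp_apply, RingHom.id_apply, starRingEnd_self_apply]
  rw [Finset.sum_mul_sum]
  refine Finset.sum_congr rfl fun s _ => Finset.sum_congr rfl fun t _ => by ring

lemma inner_EE_PP {n : ℕ} (u : EuclideanSpace ℂ (Fin n)) :
    ⟪EE n, PP u⟫_ℂ = ⟪u, u⟫_ℂ := by
  simp [EE, PP, PiLp.inner_apply, RCLike.inner_apply, Fintype.sum_prod_type, apply_ite,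
    mul_comm, -inner_self_eq_norm_sq_to_K]

lemma inner_PP_EE {n : ℕ} (u : EuclideanSpace ℂ (Fin n)) :
    ⟪PP u, EE n⟫_ℂ = ⟪u, u⟫_ℂ := by
  simp [EE, PP, PiLp.inner_apply, RCLike.inner_apply, Fintype.sum_prod_type, apply_ite,
    mul_comm, -inner_self_eq_norm_sq_to_K]

lemma inner_EE_EE {n : ℕ} : ⟪EE n, EE n⟫_ℂ = (n : ℂ) := by
  simp [EE, PiLp.inner_apply, RCLike.inner_apply, Fintype.sum_prod_type, apply_ite,
    -inner_self_eq_norm_sq_to_K]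

set_option maxHeartbeats 1000000 in
theorem stmt_18 (n m : ℕ) (hn : 2 ≤ n)
    (B : Fin m → OrthonormalBasis (Fin n) ℂ (EuclideanSpace ℂ (Fin n)))
    (hMUB : ∀ i j : Fin m, i ≠ j → ∀ a b : Fin n, ‖⟪B i a, B j b⟫_ℂ‖ = 1 / Real.sqrt n) :
    m ≤ n + 1 := by
  have hn0 : (n : ℂ) ≠ 0 := Nat.cast_ne_zero.mpr (by omega)
  have hone : ∀ (i : Fin m) (a : Fin n), ⟪B i a, B i a⟫_ℂ = 1 := by
    intro i a
    simpa using orthonormal_iff_ite.mp (B i).orthonormal a a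
  have hgram : ∀ (j i : Fin m) (b a : Fin n),
      ⟪PP (B j b), PP (B i a)⟫_ℂ =
        if j = i then (if b = a then (1:ℂ) else 0) else (n : ℂ)⁻¹ := by
    intro j i b a
    rw [inner_PP_PP]
    by_cases hij : j = i
    · subst hij
      rw [orthonormal_iff_ite.mp (B j).orthonormal b a]
      by_cases hba : b = a <;> simp [hba]
    · have hz := hMUB j i hij b a
      have h3 : (1 / Real.sqrt n : ℝ) ^ 2 = (n : ℝ)⁻¹ := by
        rw [div_pow, one_pow, Real.sq_sqrt (by positivity)]
        simp [one_div]
      rw [RCLike.mul_conj, if_neg hij, hz]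
      norm_cast
      rw [h3]
      simp
  set z0 : Fin n := ⟨0, by omega⟩ with hz0
  set Sub := {a : Fin n // a ≠ z0} with hSub
  set ι := Option (Fin m × Sub) with hι
  set f : ι → EuclideanSpace ℂ (Fin n × Fin n) :=
    fun x => x.elim (EE n) (fun ia => PP (B ia.1 ia.2.1)) with hf
  have hli : LinearIndependent ℂ f := by
    rw [Fintype.linearIndependent_iff]
    intro g hg
    have key : ∀ y : ι, ∑ x : ι, g x * ⟪f y, f x⟫_ℂ = 0 := by
      intro y
      have h2 := congrArg (fun v => ⟪f y, v⟫_ℂ) hg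
      simpa [inner_sum, inner_smul_right] using h2
    set d : ℂ := g none with hd
    set c : Fin m → Sub → ℂ := fun i a => g (some (i, a)) with hc
    set T : Fin m → ℂ := fun i => ∑ a : Sub, c i a with hT
    set S : ℂ := ∑ i : Fin m, T i with hS
    have hfnn : ⟪f none, f none⟫_ℂ = (n : ℂ) := inner_EE_EE
    have hfns : ∀ x : Fin m × Sub, ⟪f none, f (some x)⟫_ℂ = 1 := by
      intro x
      rw [show f (some x) = PP (B x.1 x.2.1) from rfl, show f none = EE n from rfl,
        inner_EE_PP, hone]
    have hfsn : ∀ x : Fin m × Sub, ⟪f (some x), f none⟫_ℂ = 1 := by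
      intro x
      rw [show f (some x) = PP (B x.1 x.2.1) from rfl, show f none = EE n from rfl,
        inner_PP_EE, hone]
    have hfss : ∀ x y : Fin m × Sub, ⟪f (some x), f (some y)⟫_ℂ =
        if x.1 = y.1 then (if x.2 = y.2 then (1:ℂ) else 0) else (n : ℂ)⁻¹ := by
      intro x y
      rw [show f (some x) = PP (B x.1 x.2.1) from rfl,
        show f (some y) = PP (B y.1 y.2.1) from rfl, hgram]
      congr 1
      by_cases hba : x.2 = y.2
      · simp [hba]
      · have hne : (x.2 : Fin n) ≠ (y.2 : Fin n) := fun hh => hba (Subtype.ext hh)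
        simp [hba, hne]
    have e0 : d * (n : ℂ) + S = 0 := by
      have h := key none
      rw [Fintype.sum_option] at h
      simp only [hfnn, hfns, mul_one] at h
      rw [show (∑ x : Fin m × Sub, g (some x)) = S by
        rw [hS]; exact Fintype.sum_prod_type _] at h
      exact h
    have e1 : ∀ (j : Fin m) (b : Sub),
        d + ∑ i : Fin m, ∑ a : Sub,
          c i a * (if j = i then (if b = a then (1:ℂ) else 0) else (n : ℂ)⁻¹) = 0 := by
      intro j b
      have h := key (some (j, b))
      rw [Fintype.sum_option] at h
      simp only [hfsn, hfss, mul_one] at h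
      rw [Fintype.sum_prod_type] at h
      exact h
    have e2 : ∀ (j : Fin m) (b : Sub),
        d + (S * (n : ℂ)⁻¹ + (c j b - T j * (n : ℂ)⁻¹)) = 0 := by
      intro j b
      have h := e1 j b
      have hsum : ∀ i : Fin m,
          ∑ a : Sub, c i a * (if j = i then (if b = a then (1:ℂ) else 0) else (n : ℂ)⁻¹)
            = T i * (n : ℂ)⁻¹ + (if j = i then c j b - T j * (n : ℂ)⁻¹ else 0) := by
        intro i
        by_cases hij : j = i
        · subst hij
          simp only [eq_self_iff_true, if_true, mul_ite, mul_one, mul_zero]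
          rw [Finset.sum_ite_eq]
          simp only [Finset.mem_univ, if_true]
          ring
        · simp [hij, hT, Finset.sum_mul]
      rw [Finset.sum_congr rfl (fun i _ => hsum i), Finset.sum_add_distrib,
        Finset.sum_ite_eq, if_pos (Finset.mem_univ j), ← Finset.sum_mul, ← hS] at h
      exact h
    have hcb : ∀ (j : Fin m) (b : Sub), c j b = T j * (n : ℂ)⁻¹ - S * (n : ℂ)⁻¹ - d := by
      intro j b
      linear_combination e2 j b
    have hcardSub : Fintype.card Sub = n - 1 := by
      have h1 : Fintype.card {a : Fin n // a ≠ z0} = n - 1 := by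
        rw [Fintype.card_subtype_compl]
        simp [Fintype.card_subtype_eq, Fintype.card_fin]
      exact h1
    have hinv : (n : ℂ)⁻¹ * n = 1 := inv_mul_cancel₀ hn0
    have hT0 : ∀ j : Fin m, T j = 0 := by
      intro j
      have hTj : T j = ((n : ℂ) - 1) * (T j * (n : ℂ)⁻¹ - S * (n : ℂ)⁻¹ - d) := by
        have h1 : T j = ∑ _a : Sub, (T j * (n : ℂ)⁻¹ - S * (n : ℂ)⁻¹ - d) := by
          rw [hT]
          exact Finset.sum_congr rfl fun a _ => hcb j a
        conv_lhs => rw [h1]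
        rw [Finset.sum_const, nsmul_eq_mul, Finset.card_univ, hcardSub,
          Nat.cast_sub (by omega), Nat.cast_one]
      linear_combination (n : ℂ) * hTj + ((n:ℂ) - 1) * (T j - S) * hinv
        - ((n:ℂ) - 1) * e0
    have hS0 : S = 0 := by
      rw [hS]
      exact Finset.sum_eq_zero fun i _ => hT0 i
    have hd0 : d = 0 := by
      have h := e0
      rw [hS0, add_zero, mul_eq_zero] at h
      tauto
    intro x
    match x with
    | none => exact hd0
    | some (i, a) =>
        have := hcb i a
        rw [hT0 i, hS0, hd0] at this
        simpa using this
  have hfin : Fintype.card ι ≤ Module.finrank ℂ (EuclideanSpace ℂ (Fin n × Fin n)) :=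
    hli.fintype_card_le_finrank
  rw [finrank_euclideanSpace] at hfin
  have hcard : Fintype.card ι = m * (n - 1) + 1 := by
    have h1 : Fintype.card (Option (Fin m × {a : Fin n // a ≠ z0})) = m * (n - 1) + 1 := by
      rw [Fintype.card_option, Fintype.card_prod, Fintype.card_fin,
        Fintype.card_subtype_compl]
      simp [Fintype.card_subtype_eq, Fintype.card_fin]
    exact h1
  rw [hcard] at hfin
  simp only [Fintype.card_prod, Fintype.card_fin] at hfin
  -- m * (n-1) + 1 ≤ n * n  ⟹  m ≤ n + 1
  obtain ⟨k, rfl⟩ : ∃ k, n = k + 2 := ⟨n - 2, by omega⟩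
  by_contra hm
  push_neg at hm
  have : (k + 4) * (k + 1) ≤ m * (k + 2 - 1) := by
    have : k + 2 - 1 = k + 1 := by omega
    rw [this]
    exact Nat.mul_le_mul_right _ (by omega)
  nlinarith
end
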